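/- Let H be a bounded self-adjoint operator with σ(H) ⊆ (0,1] on a Hilbert space M, and T = [[I, −√(H⁻¹−I)],[0,0]] on M ⊕ M. Then TT* + T*T − T − T* − I = (H⁻¹ − 2I) ⊕ (H⁻¹ − 2I). -/

import Mathlib

open ContinuousLinearMap in
/-- Let `H` be a bounded self-adjoint operator with `σ(H) ⊆ (0,1]` on a complex Hilbert
space `M`, let `S = √(H⁻¹ − I)` and `T = [[I, −S],[0,0]]` on `M ⊕ M` (ℓ² direct sum).
Then `TT* + T*T − T − T* − I = (H⁻¹ − 2I) ⊕ (H⁻¹ − 2I)`. -/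
theorem block_skew_projection_buckholtz
    {M : Type*} [NormedAddCommGroup M] [InnerProductSpace ℂ M] [CompleteSpace M]
    (H : M →L[ℂ] M) (hH : IsSelfAdjoint H)
    (hσ : spectrum ℂ H ⊆ (fun r : ℝ => (r : ℂ)) '' Set.Ioc 0 1)
    (Hinv : M →L[ℂ] M) (hHinv : H * Hinv = 1 ∧ Hinv * H = 1)
    (S : M →L[ℂ] M) (hS : S.IsPositive) (hS2 : S * S = Hinv - 1)
    (T : WithLp 2 (M × M) →L[ℂ] WithLp 2 (M × M))
    (hT : ∀ z : WithLp 2 (M × M),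
      T z = (WithLp.equiv 2 (M × M)).symm
        ((WithLp.equiv 2 (M × M) z).1 - S ((WithLp.equiv 2 (M × M) z).2), 0)) :
    ∀ z : WithLp 2 (M × M),
      (T * adjoint T + adjoint T * T - T - adjoint T - 1) z =
        (WithLp.equiv 2 (M × M)).symm
          ((Hinv - 2 • (1 : M →L[ℂ] M)) ((WithLp.equiv 2 (M × M) z).1),
           (Hinv - 2 • (1 : M →L[ℂ] M)) ((WithLp.equiv 2 (M × M) z).2)) := by
  classical
  set E := WithLp.prodContinuousLinearEquiv 2 ℂ M M
  set A : WithLp 2 (M × M) →L[ℂ] WithLp 2 (M × M) :=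
    (E.symm.toContinuousLinearMap.comp
      (((ContinuousLinearMap.fst ℂ M M).prod
        (-(S.comp (ContinuousLinearMap.fst ℂ M M)))).comp
        E.toContinuousLinearMap)) with hA
  have hAapp : ∀ z : WithLp 2 (M × M),
      A z = (WithLp.equiv 2 (M × M)).symm
        ((WithLp.equiv 2 (M × M) z).1, -S ((WithLp.equiv 2 (M × M) z).1)) := by
    intro z; rfl
  have hSsa : ∀ x y : M, inner ℂ (S x) y = (inner ℂ x (S y) : ℂ) := by
    intro x y
    have := hS.isSelfAdjoint
    rw [IsSelfAdjoint, ContinuousLinearMap.star_eq_adjoint] at this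
    rw [← ContinuousLinearMap.adjoint_inner_left, this]
  have hadj : A = adjoint T := by
    rw [ContinuousLinearMap.eq_adjoint_iff]
    intro x y
    rw [hAapp, hT]
    simp only [WithLp.prod_inner_apply]
    simp only [WithLp.equiv_symm_apply, WithLp.toLp_fst, WithLp.toLp_snd]
    simp [inner_sub_left, inner_sub_right, inner_neg_left, inner_neg_right, hSsa]
    ring
  intro z
  have hSS : ∀ x : M, S (S x) = Hinv x - x := by
    intro x
    have := congrArg (fun f => f x) hS2
    simpa using this
  simp only [ContinuousLinearMap.sub_apply, ContinuousLinearMap.add_apply,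
    ContinuousLinearMap.mul_apply, ContinuousLinearMap.one_apply, ← hadj,
    hAapp, hT]
  apply E.injective
  have hE : ∀ x : WithLp 2 (M × M), E x = WithLp.equiv 2 (M × M) x := fun _ => rfl
  simp only [map_add, map_sub, map_smul, hE, Equiv.apply_symm_apply]
  refine Prod.ext ?_ ?_ <;>
    simp [hSS, Prod.fst_add, Prod.snd_add, Prod.fst_sub, Prod.snd_sub] <;> abel
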